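/- Let z₀ ∈ ℂ∖Λ be fixed. Then on U the matrix field Ω encoding the 2-form ω = −δln f₁ ∧ δx₁ − δln f₂ ∧ δx₂ + W(x₁−x₂) δx₁ ∧ δx₂ satisfies: (i) for all 1 ≤ i < j < k ≤ 4, ∂_i Ω_{jk} − ∂_j Ω_{ik} + ∂_k Ω_{ij} = 0 (ω is closed); (ii) det Ω(p) = 1/(f₁ f₂)² ≠ 0 at every p ∈ U (ω is nondegenerate); (iii) the vector field X(p) = (f₁, f₂, −f₁ f₂ W(x₁−x₂), f₁ f₂ W(x₁−x₂)) satisfies Σ_{k=1}^4 X_k Ω_{kj} = ∂_j H for all j = 1,…,4, where H = f₁ + f₂. In other words, the elliptic spin Ruijsenaars–Schneider system for N = 2 is Hamiltonian with symplectic form ω and Hamiltonian H = f₁ + f₂, whose flow is ẋ₁ = f₁, ẋ₂ = f₂, ḟ₁ = −f₁ f₂ (ζ(z₀+x₁−x₂) − ζ(z₀−x₁+x₂) − 2ζ(x₁−x₂)), ḟ₂ = f₁ f₂ (ζ(z₀+x₁−x₂) − ζ(z₀−x₁+x₂) − 2ζ(x₁−x₂)). -/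

import Mathlib

noncomputable section
open Complex

/-- The lattice Λ = ℤω₁ + ℤω₂. -/
def lattice (ω₁ ω₂ : ℂ) : Set ℂ := {z | ∃ m n : ℤ, z = m * ω₁ + n * ω₂}

/-- The Weierstrass zeta function ζ(z) = 1/z + Σ_{ω ∈ Λ∖{0}} (1/(z−ω) + 1/ω + z/ω²). -/
def wzeta (ω₁ ω₂ : ℂ) (z : ℂ) : ℂ :=
  1 / z + ∑' w : {w : ℂ // w ∈ lattice ω₁ ω₂ ∧ w ≠ 0},
    (1 / (z - (w : ℂ)) + 1 / (w : ℂ) + z / (w : ℂ) ^ 2)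

/-- W(u) = ζ(u+z₀) + ζ(u−z₀) − 2ζ(u). -/
def Wfun (ω₁ ω₂ z₀ u : ℂ) : ℂ :=
  wzeta ω₁ ω₂ (u + z₀) + wzeta ω₁ ω₂ (u - z₀) - 2 * wzeta ω₁ ω₂ u

/-- The antisymmetric matrix field Ω encoding the 2-form
ω = −δln f₁ ∧ δx₁ − δln f₂ ∧ δx₂ + W(x₁−x₂) δx₁ ∧ δx₂,
in the coordinate order (x₁,x₂,f₁,f₂) = (p 0, p 1, p 2, p 3):
Ω₁₂ = W(x₁−x₂), Ω₁₃ = 1/f₁, Ω₂₄ = 1/f₂, Ω₁₄ = Ω₂₃ = Ω₃₄ = 0, Ω_{ji} = −Ω_{ij}. -/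
def OmegaM (ω₁ ω₂ z₀ : ℂ) (p : Fin 4 → ℂ) : Matrix (Fin 4) (Fin 4) ℂ :=
  !![0, Wfun ω₁ ω₂ z₀ (p 0 - p 1), 1 / p 2, 0;
     -Wfun ω₁ ω₂ z₀ (p 0 - p 1), 0, 0, 1 / p 3;
     -(1 / p 2), 0, 0, 0;
     0, -(1 / p 3), 0, 0]

/-- The open set U = {(x₁,x₂,f₁,f₂) : f₁ ≠ 0, f₂ ≠ 0, x₁−x₂ ∉ Λ, x₁−x₂±z₀ ∉ Λ}. -/
def Uset (ω₁ ω₂ z₀ : ℂ) : Set (Fin 4 → ℂ) :=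
  {p | p 2 ≠ 0 ∧ p 3 ≠ 0 ∧ p 0 - p 1 ∉ lattice ω₁ ω₂ ∧
    p 0 - p 1 + z₀ ∉ lattice ω₁ ω₂ ∧ p 0 - p 1 - z₀ ∉ lattice ω₁ ω₂}

/-- Complex partial derivative ∂_i F(p) in the i-th coordinate. -/
def pderiv (i : Fin 4) (F : (Fin 4 → ℂ) → ℂ) (p : Fin 4 → ℂ) : ℂ :=
  deriv (fun t => F (Function.update p i t)) (p i)

/-- The vector field X(p) = (f₁, f₂, −f₁ f₂ W(x₁−x₂), f₁ f₂ W(x₁−x₂)). -/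
def Xvec (ω₁ ω₂ z₀ : ℂ) (p : Fin 4 → ℂ) : Fin 4 → ℂ :=
  ![p 2, p 3, -(p 2 * p 3 * Wfun ω₁ ω₂ z₀ (p 0 - p 1)),
    p 2 * p 3 * Wfun ω₁ ω₂ z₀ (p 0 - p 1)]

lemma neg_mem_lattice {ω₁ ω₂ z : ℂ} (h : z ∈ lattice ω₁ ω₂) : -z ∈ lattice ω₁ ω₂ := by
  obtain ⟨m, n, rfl⟩ := h
  exact ⟨-m, -n, by push_cast; ring⟩

/-- The negation equivalence on nonzero lattice points. -/
def negEquiv (ω₁ ω₂ : ℂ) :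
    {w : ℂ // w ∈ lattice ω₁ ω₂ ∧ w ≠ 0} ≃ {w : ℂ // w ∈ lattice ω₁ ω₂ ∧ w ≠ 0} where
  toFun w := ⟨-w.1, neg_mem_lattice w.2.1, neg_ne_zero.mpr w.2.2⟩
  invFun w := ⟨-w.1, neg_mem_lattice w.2.1, neg_ne_zero.mpr w.2.2⟩
  left_inv w := by simp
  right_inv w := by simp

/-- The Weierstrass zeta function is odd. -/
lemma wzeta_neg (ω₁ ω₂ z : ℂ) : wzeta ω₁ ω₂ (-z) = - wzeta ω₁ ω₂ z := by
  unfold wzeta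
  have h1 : ∑' w : {w : ℂ // w ∈ lattice ω₁ ω₂ ∧ w ≠ 0},
      (1 / (-z - (w : ℂ)) + 1 / (w : ℂ) + (-z) / (w : ℂ) ^ 2)
      = ∑' w : {w : ℂ // w ∈ lattice ω₁ ω₂ ∧ w ≠ 0},
      (-(1 / (z - (w : ℂ)) + 1 / (w : ℂ) + z / (w : ℂ) ^ 2)) := by
    rw [← Equiv.tsum_eq (negEquiv ω₁ ω₂)
      (fun w => 1 / (-z - (w : ℂ)) + 1 / (w : ℂ) + (-z) / (w : ℂ) ^ 2)]
    apply tsum_congr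
    intro w
    have hw : ((negEquiv ω₁ ω₂ w : {w : ℂ // w ∈ lattice ω₁ ω₂ ∧ w ≠ 0}) : ℂ) = -(w : ℂ) := rfl
    rw [hw]
    rw [show -z - -(w : ℂ) = -(z - (w : ℂ)) by ring, div_neg, div_neg,
      show (-(w : ℂ)) ^ 2 = (w : ℂ) ^ 2 by ring]
    ring
  rw [h1, tsum_neg]
  ring

lemma pderiv_const_of (i : Fin 4) (F : (Fin 4 → ℂ) → ℂ) (p : Fin 4 → ℂ) (c : ℂ)
    (h : ∀ t, F (Function.update p i t) = c) : pderiv i F p = 0 := by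
  unfold pderiv
  simp only [h]
  exact deriv_const _ _

lemma det_aux (a b c : ℂ) :
    (!![0, a, b, 0; -a, 0, 0, c; -b, 0, 0, 0; 0, -c, 0, 0] : Matrix (Fin 4) (Fin 4) ℂ).det
      = b ^ 2 * c ^ 2 := by
  rw [Matrix.det_succ_row_zero]
  simp [Fin.sum_univ_succ, Matrix.det_fin_three, Fin.succAbove, Matrix.submatrix]
  ring

lemma pderiv_eq_zero (i : Fin 4) (F : (Fin 4 → ℂ) → ℂ) (p : Fin 4 → ℂ)
    (h : ∀ t, F (Function.update p i t) = F p) : pderiv i F p = 0 :=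
  pderiv_const_of i F p (F p) h

/-- In the case N=2 the elliptic spin Ruijsenaars–Schneider system is Hamiltonian with
symplectic form ω = −δln f₁ ∧ δx₁ − δln f₂ ∧ δx₂ + W(x₁−x₂) δx₁ ∧ δx₂ and Hamiltonian
H = f₁ + f₂: ω is closed, nondegenerate (det Ω = 1/(f₁f₂)² ≠ 0), and the Hamiltonian
vector field of H is X = (f₁, f₂, −f₁f₂W(x₁−x₂), f₁f₂W(x₁−x₂)), i.e. the flow
ẋ₁ = f₁, ẋ₂ = f₂, ḟ₁ = −f₁f₂(ζ(z₀+x₁−x₂) − ζ(z₀−x₁+x₂) − 2ζ(x₁−x₂)),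
ḟ₂ = f₁f₂(ζ(z₀+x₁−x₂) − ζ(z₀−x₁+x₂) − 2ζ(x₁−x₂)). -/
theorem spin_RS_N2_hamiltonian (ω₁ ω₂ : ℂ) (hω : (ω₂ / ω₁).im ≠ 0)
    (z₀ : ℂ) (hz₀ : z₀ ∉ lattice ω₁ ω₂) :
    ∀ p ∈ Uset ω₁ ω₂ z₀,
      -- (i) ω is closed
      (∀ i j k : Fin 4, i < j → j < k →
        pderiv i (fun q => OmegaM ω₁ ω₂ z₀ q j k) p
          - pderiv j (fun q => OmegaM ω₁ ω₂ z₀ q i k) p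
          + pderiv k (fun q => OmegaM ω₁ ω₂ z₀ q i j) p = 0) ∧
      -- (ii) ω is nondegenerate
      ((OmegaM ω₁ ω₂ z₀ p).det = 1 / (p 2 * p 3) ^ 2 ∧ (OmegaM ω₁ ω₂ z₀ p).det ≠ 0) ∧
      -- (iii) X is the Hamiltonian vector field of H = f₁ + f₂
      (∀ j : Fin 4, ∑ k : Fin 4, Xvec ω₁ ω₂ z₀ p k * OmegaM ω₁ ω₂ z₀ p k j
          = pderiv j (fun q => q 2 + q 3) p) ∧
      -- the flow is ẋ₁ = f₁, ẋ₂ = f₂, ḟ₁ = −f₁f₂(ζ(z₀+x) − ζ(z₀−x) − 2ζ(x)), ḟ₂ = −ḟ₁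
      Xvec ω₁ ω₂ z₀ p = ![p 2, p 3,
        -(p 2 * p 3 * (wzeta ω₁ ω₂ (z₀ + (p 0 - p 1)) - wzeta ω₁ ω₂ (z₀ - (p 0 - p 1))
          - 2 * wzeta ω₁ ω₂ (p 0 - p 1))),
        p 2 * p 3 * (wzeta ω₁ ω₂ (z₀ + (p 0 - p 1)) - wzeta ω₁ ω₂ (z₀ - (p 0 - p 1))
          - 2 * wzeta ω₁ ω₂ (p 0 - p 1))] := by
  intro p hp
  obtain ⟨h2, h3, _, _, _⟩ := hp
  refine ⟨?_, ⟨?_, ?_⟩, ?_, ?_⟩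
  · intro i j k hij hjk
    fin_cases i <;> fin_cases j <;> fin_cases k <;>
      simp_all only [Fin.mk_lt_mk, Fin.isValue] <;>
      try omega
    all_goals {
      rw [pderiv_eq_zero _ _ _ (fun t => by simp [OmegaM, Function.update]),
          pderiv_eq_zero _ _ _ (fun t => by simp [OmegaM, Function.update]),
          pderiv_eq_zero _ _ _ (fun t => by simp [OmegaM, Function.update])]
      ring
    }
  · rw [OmegaM, det_aux]
    field_simp
  · rw [OmegaM, det_aux]
    have h : (1 / p 2) ^ 2 * (1 / p 3) ^ 2 = 1 / (p 2 * p 3) ^ 2 := by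
      field_simp
    rw [h]
    exact one_div_ne_zero (pow_ne_zero _ (mul_ne_zero h2 h3))
  · have hd0 : pderiv 0 (fun q => q 2 + q 3) p = 0 :=
      pderiv_eq_zero _ _ _ (fun t => by simp [Function.update])
    have hd1 : pderiv 1 (fun q => q 2 + q 3) p = 0 :=
      pderiv_eq_zero _ _ _ (fun t => by simp [Function.update])
    have hd2 : pderiv 2 (fun q => q 2 + q 3) p = 1 := by
      unfold pderiv
      have h : (fun t => Function.update p 2 t 2 + Function.update p 2 t 3)
          = fun t => t + p 3 := by
        funext t; simp [Function.update]
      rw [show (fun t => (fun q : Fin 4 → ℂ => q 2 + q 3) (Function.update p 2 t))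
          = fun t => t + p 3 from h]
      simp
    have hd3 : pderiv 3 (fun q => q 2 + q 3) p = 1 := by
      unfold pderiv
      have h : (fun t => Function.update p 3 t 2 + Function.update p 3 t 3)
          = fun t => p 2 + t := by
        funext t; simp [Function.update]
      rw [show (fun t => (fun q : Fin 4 → ℂ => q 2 + q 3) (Function.update p 3 t))
          = fun t => p 2 + t from h]
      rw [deriv_const_add]
      exact deriv_id (p 3)
    intro j
    fin_cases j <;>
      (try simp only [Fin.isValue, Fin.sum_univ_four, Xvec, OmegaM, Matrix.cons_val_zero,
        Matrix.cons_val_one, Matrix.head_cons, Matrix.of_apply, Matrix.cons_val',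
        Matrix.empty_val', Matrix.cons_val_fin_one, Matrix.cons_val_two,
        Matrix.cons_val_three, Matrix.tail_cons, Matrix.head_fin_const]) <;>
      (try simp only [show (⟨0, by omega⟩ : Fin 4) = 0 from rfl,
        show (⟨1, by omega⟩ : Fin 4) = 1 from rfl,
        show (⟨2, by omega⟩ : Fin 4) = 2 from rfl, show (⟨3, by omega⟩ : Fin 4) = 3 from rfl,
        hd0, hd1, hd2, hd3]) <;>
      (try simp only [Matrix.cons_val]) <;>
      field_simp <;> ring
  · have key : Wfun ω₁ ω₂ z₀ (p 0 - p 1)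
        = wzeta ω₁ ω₂ (z₀ + (p 0 - p 1)) - wzeta ω₁ ω₂ (z₀ - (p 0 - p 1))
          - 2 * wzeta ω₁ ω₂ (p 0 - p 1) := by
      unfold Wfun
      rw [show p 0 - p 1 - z₀ = -(z₀ - (p 0 - p 1)) by ring, wzeta_neg,
        show p 0 - p 1 + z₀ = z₀ + (p 0 - p 1) by ring]
      ring
    unfold Xvec
    rw [key]
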